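/- Location correspondence along traces (key induction step in the proof of Theorem 1): Let P and Q be programs, and let ι be a structure matching between P and Q with ι(l_init^P) = l_init^Q. Let ⟦P⟧(m) = (l_{1,1}, m_{1,1})⋯(l_{1,n}, m_{1,n}) and ⟦Q⟧(m̃) = (l_{2,1}, m_{2,1})⋯(l_{2,n}, m_{2,n}) be traces of the same length n (for arbitrary input memories m and m̃) such that m_{1,i}(cond') = m_{2,i}(cond') for all 1 ≤ i < n. Then l_{2,i} = ι(l_{1,i}) for all 1 ≤ i ≤ n. -/
import Mathlib


/-- Every variable type comes with the two distinguished special variables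
`cond` and `ret`. -/
class SpecVars (V : Type) where
  cond : V
  ret : V

/-- Expressions over variables in `V`: unprimed variables `v`, primed
variables `v'`, constants, operation symbols and application. -/
inductive Expr (V : Type) : Type
  | var : V → Expr V
  | pvar : V → Expr V
  | const : ℕ → Expr V
  | op : ℕ → Expr V
  | app : Expr V → Expr V → Expr V

/-- The (primed/unprimed) variables occurring in an expression;
`(v, false)` stands for `v` and `(v, true)` for the primed variable `v'`. -/
def Expr.fvars {V : Type} : Expr V → Set (V × Bool)
  | .var v => {(v, false)}
  | .pvar v => {(v, true)}
  | .const _ => ∅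
  | .op _ => ∅
  | .app e₁ e₂ => e₁.fvars ∪ e₂.fvars

/-- Renaming the variables of an expression along `π` (this is `e[π]`). -/
def Expr.rename {V : Type} (π : V → V) : Expr V → Expr V
  | .var v => .var (π v)
  | .pvar v => .pvar (π v)
  | .const c => .const c
  | .op o => .op o
  | .app e₁ e₂ => .app (e₁.rename π) (e₂.rename π)

/-- A computation domain: a type with distinguished pairwise distinct values
`tt` (Boolean true), `ff` (Boolean false) and `bot` (the undefined value). -/
structure CompDom (D : Type) where
  tt : D
  ff : D
  bot : D
  tt_ne_ff : tt ≠ ff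
  tt_ne_bot : tt ≠ bot
  ff_ne_bot : ff ≠ bot

/-- A memory: a total map on variables and primed variables
(`(v, false)` is `v`, `(v, true)` is `v'`). -/
abbrev Memory (V D : Type) := V × Bool → D

/-- A program.  The successor function returns `none` for the distinguished
end location `l_end`. -/
structure Program (L V : Type) [SpecVars V] where
  locs : Finset L
  linit : L
  linit_mem : linit ∈ locs
  vars : Finset V
  cond_mem : SpecVars.cond ∈ vars
  ret_mem : SpecVars.ret ∈ vars
  label : L → V → Expr V
  succ : L → Bool → Option L
  succ_mem : ∀ l ∈ locs, ∀ (b : Bool) (l' : L), succ l b = some l' → l' ∈ locs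

/-- `IsTrace dom eval P mi τ` : `τ` is a trace of the program `P` on the input
memory `mi` (conditions (1)-(4) of the definition of the program semantics). -/
def IsTrace {L V D : Type} [SpecVars V] (dom : CompDom D)
    (eval : Expr V → Memory V D → Option D) (P : Program L V)
    (mi : Memory V D) (τ : List (L × Memory V D)) : Prop :=
  τ ≠ [] ∧
  (∀ (h : 0 < τ.length), (τ.get ⟨0, h⟩).1 = P.linit) ∧
  (∀ (h : 0 < τ.length), ∀ v ∈ P.vars, (τ.get ⟨0, h⟩).2 (v, false) = mi (v, false)) ∧
  (∀ (i : ℕ) (h : i < τ.length), ∀ v ∈ P.vars,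
    eval (P.label (τ.get ⟨i, h⟩).1 v) (τ.get ⟨i, h⟩).2
      = some ((τ.get ⟨i, h⟩).2 (v, true))) ∧
  (∀ (i : ℕ) (h : i + 1 < τ.length), ∀ v ∈ P.vars,
    (τ.get ⟨i + 1, h⟩).2 (v, false) = (τ.get ⟨i, Nat.lt_of_succ_lt h⟩).2 (v, true)) ∧
  (∀ (i : ℕ) (h : i + 1 < τ.length), ∃ b : Bool,
    (τ.get ⟨i, Nat.lt_of_succ_lt h⟩).2 (SpecVars.cond, true)
      = (if b then dom.tt else dom.ff) ∧
    P.succ (τ.get ⟨i, Nat.lt_of_succ_lt h⟩).1 b = some (τ.get ⟨i + 1, h⟩).1) ∧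
  (∀ (h : 0 < τ.length) (b : Bool),
    P.succ (τ.get ⟨τ.length - 1, Nat.sub_lt h Nat.one_pos⟩).1 b = none)

/-- Matching variables: `v₁ ∼_{τ₁,τ₂} v₂`. -/
def MatchVars {L₁ L₂ V₁ V₂ D : Type} (dom : CompDom D)
    (τ₁ : List (L₁ × Memory V₁ D)) (τ₂ : List (L₂ × Memory V₂ D))
    (v₁ : V₁) (v₂ : V₂) : Prop :=
  ∀ (i : ℕ) (h₁ : i < τ₁.length) (h₂ : i < τ₂.length),
    (τ₁.get ⟨i, h₁⟩).2 (v₁, true) = dom.bot ∨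
    (τ₁.get ⟨i, h₁⟩).2 (v₁, true) = (τ₂.get ⟨i, h₂⟩).2 (v₂, true)

/-- A structure matching between `P` and `Q` (the extension by
`ι(l_end) = l_end` is captured by `Option.map`). -/
def StructMatch {L V : Type} [SpecVars V] (P Q : Program L V) (ι : L → L) : Prop :=
  Set.BijOn ι ↑P.locs ↑Q.locs ∧
  ∀ l ∈ P.locs, ∀ b : Bool, Option.map ι (P.succ l b) = Q.succ (ι l) b

/-- `P` matches `Q` on the set of inputs `I` with witness `(ι, σ)`,
written `P ≅_{I,ι,σ} Q`. -/
def Matches {L V D : Type} [SpecVars V] (dom : CompDom D)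
    (eval : Expr V → Memory V D → Option D) (P Q : Program L V)
    (I : Set (Memory V D)) (ι : L → L) (σ : V → V) : Prop :=
  StructMatch P Q ι ∧
  Set.InjOn σ ↑P.vars ∧
  Set.MapsTo σ ↑P.vars ↑Q.vars ∧
  σ SpecVars.cond = SpecVars.cond ∧
  σ SpecVars.ret = SpecVars.ret ∧
  ∀ m ∈ I, ∃ τ₁ τ₂, IsTrace dom eval P m τ₁ ∧ IsTrace dom eval Q m τ₂ ∧
    τ₁.length = τ₂.length ∧ ∀ v ∈ P.vars, MatchVars dom τ₁ τ₂ v (σ v)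

/-- Location correspondence along traces.  If `ι` is a structure
matching between `P` and `Q` with `ι(l_init^P) = l_init^Q`, and
`⟦P⟧(m)` and `⟦Q⟧(m̃)` are traces of the same length `n` whose memories agree
on `cond'` at all positions `1 ≤ i < n`, then `l_{2,i} = ι(l_{1,i})` for all
`1 ≤ i ≤ n`. -/
theorem location_correspondence {L V D : Type} [SpecVars V]
    (dom : CompDom D) (eval : Expr V → Memory V D → Option D)
    (P Q : Program L V) (ι : L → L)
    (hι : StructMatch P Q ι) (hinit : ι P.linit = Q.linit)
    (m mt : Memory V D) (τ₁ τ₂ : List (L × Memory V D))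
    (h₁ : IsTrace dom eval P m τ₁) (h₂ : IsTrace dom eval Q mt τ₂)
    (hlen : τ₁.length = τ₂.length)
    (hcond : ∀ (i : ℕ) (hi : i + 1 < τ₁.length) (hi' : i < τ₂.length),
      (τ₁.get ⟨i, Nat.lt_of_succ_lt hi⟩).2 (SpecVars.cond, true)
        = (τ₂.get ⟨i, hi'⟩).2 (SpecVars.cond, true)) :
    ∀ (i : ℕ) (hi : i < τ₁.length) (hi' : i < τ₂.length),
      (τ₂.get ⟨i, hi'⟩).1 = ι (τ₁.get ⟨i, hi⟩).1 := by
  obtain ⟨-, hP1, -, -, -, hP6, -⟩ := h₁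
  obtain ⟨-, hQ1, -, -, -, hQ6, -⟩ := h₂
  -- all trace locations of P lie in P.locs
  have hmem : ∀ (i : ℕ) (hi : i < τ₁.length), (τ₁.get ⟨i, hi⟩).1 ∈ P.locs := by
    intro i
    induction i with
    | zero => intro hi; rw [hP1 hi]; exact P.linit_mem
    | succ j ih =>
      intro hi
      obtain ⟨b, -, hs⟩ := hP6 j hi
      exact P.succ_mem _ (ih _) b _ hs
  intro i
  induction i with
  | zero =>
    intro hi hi'
    rw [hQ1 hi', hP1 hi, hinit]
  | succ j ih =>
    intro hi hi'
    have hj : j < τ₁.length := Nat.lt_of_succ_lt hi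
    have hj' : j < τ₂.length := Nat.lt_of_succ_lt hi'
    have hj1' : j + 1 < τ₂.length := hi'
    obtain ⟨b₁, hc₁, hs₁⟩ := hP6 j hi
    obtain ⟨b₂, hc₂, hs₂⟩ := hQ6 j hj1'
    have hcc := hcond j hi hj'
    have hb : b₁ = b₂ := by
      rw [hcc, hc₂] at hc₁
      cases b₁ <;> cases b₂
      · rfl
      · simp at hc₁; exact absurd hc₁ dom.tt_ne_ff
      · simp at hc₁; exact absurd hc₁.symm dom.tt_ne_ff
      · rfl
    subst hb
    have := hι.2 (τ₁.get ⟨j, hj⟩).1 (hmem j hj) b₁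
    rw [ih hj hj', ← this, hs₁] at hs₂
    simpa using hs₂.symm
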